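/- Let ν and μ be distributions on S×X×A, β a distribution on X, B ⊆ X, m a positive integer, σ₁ > 0 and C ≥ 0. Assume β(x) ≥ σ₁ for all x ∈ B, and ν(s,a) ≤ C·μ(s,a) for all (s,a) ∈ S×A (marginals). Then for every function f : S×X×A → ℝ, ‖f‖_{2,ν,B} ≤ sqrt((m+1)C/(m σ₁)) · ‖f‖_{2,μ̄_β,B}. -/

import Mathlib

open Finset

section Defs

variable {S X A : Type*} [Fintype S] [Fintype X] [Fintype A]

/-- A distribution on `S × X × A`, written in curried form. -/
def IsDist3 (ν : S → X → A → ℝ) : Prop :=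
  (∀ s x a, 0 ≤ ν s x a) ∧ ∑ s, ∑ x, ∑ a, ν s x a = 1

/-- A distribution on `X`. -/
def IsDist1 (β : X → ℝ) : Prop := (∀ x, 0 ≤ β x) ∧ ∑ x, β x = 1

/-- A distribution on `S × X`. -/
def IsDist2 (η : S → X → ℝ) : Prop := (∀ s x, 0 ≤ η s x) ∧ ∑ s, ∑ x, η s x = 1

/-- A Markov transition kernel `P(·|s,a)` on `S`. -/
def IsKernel (P : S → A → S → ℝ) : Prop :=
  (∀ s a s', 0 ≤ P s a s') ∧ ∀ s a, ∑ s', P s a s' = 1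

/-- The `(s,a)`-marginal of a distribution on `S × X × A`. -/
def marginal (ν : S → X → A → ℝ) (s : S) (a : A) : ℝ := ∑ x, ν s x a

/-- The augmented distribution `μ̄_β` after generating `m` virtual samples per real sample. -/
noncomputable def augDist (μ : S → X → A → ℝ) (β : X → ℝ) (m : ℕ) (s : S) (x : X) (a : A) : ℝ :=
  (1 / ((m : ℝ) + 1)) * μ s x a + ((m : ℝ) / ((m : ℝ) + 1)) * marginal μ s a * β x

/-- The weighted `L²(ν)` norm of `f : S × X × A → ℝ`. -/
noncomputable def norm2 (ν : S → X → A → ℝ) (f : S → X → A → ℝ) : ℝ :=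
  Real.sqrt (∑ s, ∑ x, ∑ a, ν s x a * f s x a ^ 2)

/-- The `B`-restricted weighted `L²(ν)` norm (sum only over `x ∈ B`). -/
noncomputable def norm2B (ν : S → X → A → ℝ) (B : Finset X) (f : S → X → A → ℝ) : ℝ :=
  Real.sqrt (∑ s, ∑ x ∈ B, ∑ a, ν s x a * f s x a ^ 2)

/-- The weighted `L²(η)` norm of `h : S × X → ℝ`. -/
noncomputable def norm2SX (η : S → X → ℝ) (h : S → X → ℝ) : ℝ :=
  Real.sqrt (∑ s, ∑ x, η s x * h s x ^ 2)

/-- `V_f(s,x) := min_{a ∈ A} f(s,x,a)`. -/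
noncomputable def Vmin [Nonempty A] (f : S → X → A → ℝ) (s : S) (x : X) : ℝ :=
  Finset.univ.inf' Finset.univ_nonempty (f s x)

/-- The Bellman (optimality) operator `(T f)(s,x,a) = R(s,x,a) + γ Σ_{s'} P(s'|s,a) V_f(s', g(s,x,a,s'))`. -/
noncomputable def bellman [Nonempty A] (P : S → A → S → ℝ) (g : S → X → A → S → X)
    (R : S → X → A → ℝ) (γ : ℝ) (f : S → X → A → ℝ) (s : S) (x : X) (a : A) : ℝ :=
  R s x a + γ * ∑ s', P s a s' * Vmin f s' (g s x a s')

/-- The pushforward distribution `P(ν)` on `S × X`. -/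
noncomputable def pushforward [DecidableEq X] (P : S → A → S → ℝ) (g : S → X → A → S → X)
    (ν : S → X → A → ℝ) (s' : S) (x' : X) : ℝ :=
  ∑ s, ∑ x, ∑ a, ν s x a * P s a s' * (if x' = g s x a s' then 1 else 0)

/-- The product distribution `η × π` on `S × X × A` of a state distribution and a
deterministic policy. -/
def prodPolicy [DecidableEq A] (η : S → X → ℝ) (π : S → X → A) (s : S) (x : X) (a : A) : ℝ :=
  η s x * (if a = π s x then 1 else 0)

/-- `π` is a selection of `argmin_a min{f(s,x,a), f'(s,x,a)}`. -/
def IsMinSelection (f f' : S → X → A → ℝ) (π : S → X → A) : Prop :=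
  ∀ s x a, min (f s x (π s x)) (f' s x (π s x)) ≤ min (f s x a) (f' s x a)

end Defs

/-- Lemma S.2: norm change of measure,
`‖f‖_{2,ν,B} ≤ sqrt((m+1)C/(m σ₁)) ‖f‖_{2,μ̄_β,B}`. -/
theorem statement1 {S X A : Type*} [Fintype S] [Fintype X] [Fintype A]
    [Nonempty S] [Nonempty X] [Nonempty A]
    (ν μ : S → X → A → ℝ) (β : X → ℝ) (B : Finset X) (m : ℕ) (σ1 C : ℝ)
    (hν : IsDist3 ν) (hμ : IsDist3 μ) (hβ : IsDist1 β)
    (hm : 0 < m) (hσ1 : 0 < σ1) (hC : 0 ≤ C)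
    (hβB : ∀ x ∈ B, σ1 ≤ β x)
    (hcov : ∀ s a, marginal ν s a ≤ C * marginal μ s a) :
    ∀ f : S → X → A → ℝ,
      norm2B ν B f
        ≤ Real.sqrt (((m : ℝ) + 1) * C / ((m : ℝ) * σ1)) * norm2B (augDist μ β m) B f := by
  intro f
  have hm1 : (0:ℝ) < (m:ℝ) + 1 := by positivity
  have hmpos : (0:ℝ) < (m:ℝ) := by exact_mod_cast hm
  set c : ℝ := ((m : ℝ) + 1) * C / ((m : ℝ) * σ1) with hc
  have hc0 : 0 ≤ c := by positivity
  rw [norm2B, norm2B, ← Real.sqrt_mul hc0, Finset.mul_sum]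
  apply Real.sqrt_le_sqrt
  apply Finset.sum_le_sum
  intro s _
  rw [Finset.mul_sum]
  apply Finset.sum_le_sum
  intro x hx
  rw [Finset.mul_sum]
  apply Finset.sum_le_sum
  intro a _
  rw [← mul_assoc]
  apply mul_le_mul_of_nonneg_right _ (sq_nonneg _)
  -- ν s x a ≤ c * augDist μ β m s x a
  have hνle : ν s x a ≤ marginal ν s a := by
    unfold marginal
    exact Finset.single_le_sum (fun x _ => hν.1 s x a) (Finset.mem_univ x)
  have hμm : 0 ≤ marginal μ s a := Finset.sum_nonneg fun x _ => hμ.1 s x a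
  have haug : ((m:ℝ) / ((m:ℝ) + 1)) * marginal μ s a * σ1 ≤ augDist μ β m s x a := by
    unfold augDist
    have h1 : (0:ℝ) ≤ (1 / ((m : ℝ) + 1)) * μ s x a := by
      have := hμ.1 s x a; positivity
    have h2 : ((m:ℝ) / ((m:ℝ) + 1)) * marginal μ s a * σ1
        ≤ ((m:ℝ) / ((m:ℝ) + 1)) * marginal μ s a * β x := by
      apply mul_le_mul_of_nonneg_left (hβB x hx)
      positivity
    linarith
  calc ν s x a ≤ C * marginal μ s a := hνle.trans (hcov s a)
    _ = c * (((m:ℝ) / ((m:ℝ) + 1)) * marginal μ s a * σ1) := by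
        rw [hc]; field_simp
    _ ≤ c * augDist μ β m s x a := mul_le_mul_of_nonneg_left haug hc0
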